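/- Suppose g11, g22, g33, g44 are the minimal-degree generators of the ideals C1 = Res(Res(C)), C2 = Tor(Res(C)), C3 = Res(Tor(C)), C4 = Tor(Tor(C)) of Z2[z]/(z^n-1) associated to an ideal C of R[z]/(z^n-1) with R = Z4[v]/(v^2). Then C1 ⊆ C3 and C1 ⊆ C4 and C2 ⊆ C4; equivalently, g33 divides g11, g44 divides g11, and g44 divides g22 in Z2[z]. -/

import Mathlib

open Polynomial

/-- The ring `R = Z₄[v]/(v²)`. -/
abbrev Rv : Type := Polynomial (ZMod 4) ⧸ Ideal.span {(X : Polynomial (ZMod 4)) ^ 2}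

noncomputable instance instCommRingRv : CommRing Rv := Ideal.Quotient.commRing _

/-- The image of `v` in `R`. -/
noncomputable def vR : Rv := Ideal.Quotient.mk _ X

/-- The embedding `Z₄ → R`. -/
noncomputable def ι4R : ZMod 4 →+* Rv :=
  (Ideal.Quotient.mk (Ideal.span {(X : Polynomial (ZMod 4)) ^ 2})).comp Polynomial.C

/-- `R[z]/(zⁿ - 1)`. -/
abbrev Rz (n : ℕ) : Type := Polynomial Rv ⧸ Ideal.span {(X : Polynomial Rv) ^ n - 1}

/-- `Z₄[z]/(zⁿ - 1)`. -/
abbrev Z4z (n : ℕ) : Type :=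
  Polynomial (ZMod 4) ⧸ Ideal.span {(X : Polynomial (ZMod 4)) ^ n - 1}

/-- `Z₂[z]/(zⁿ - 1)`. -/
abbrev Z2z (n : ℕ) : Type :=
  Polynomial (ZMod 2) ⧸ Ideal.span {(X : Polynomial (ZMod 2)) ^ n - 1}

/-- Projection `R[z] → R[z]/(zⁿ - 1)`. -/
noncomputable def πR (n : ℕ) : Polynomial Rv →+* Rz n := Ideal.Quotient.mk _

/-- Projection `Z₄[z] → Z₄[z]/(zⁿ - 1)`. -/
noncomputable def π4 (n : ℕ) : Polynomial (ZMod 4) →+* Z4z n := Ideal.Quotient.mk _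

/-- Projection `Z₂[z] → Z₂[z]/(zⁿ - 1)`. -/
noncomputable def π2 (n : ℕ) : Polynomial (ZMod 2) →+* Z2z n := Ideal.Quotient.mk _

/-- The image of `v` in `R[z]/(zⁿ - 1)`. -/
noncomputable def vz (n : ℕ) : Rz n := πR n (Polynomial.C vR)

/-- Reduction `Z₄ → Z₂`. -/
noncomputable def r42 : ZMod 4 →+* ZMod 2 := ZMod.castHom (show 2 ∣ 4 by norm_num) (ZMod 2)

/-- `Res(C)` of an ideal `C ⊆ R[z]/(zⁿ-1)`, as a subset of `Z₄[z]/(zⁿ-1)`: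
elements `a` with `a + k·b ∈ C` for some `b`, where `k = v`. -/
noncomputable def ResR (n : ℕ) (I : Ideal (Rz n)) : Set (Z4z n) :=
  {a | ∃ A : Polynomial (ZMod 4), π4 n A = a ∧
    ∃ b : Rz n, πR n (A.map ι4R) + vz n * b ∈ I}

/-- `Tor(C)` of an ideal `C ⊆ R[z]/(zⁿ-1)`: elements `a` with `k·a ∈ C`. -/
noncomputable def TorR (n : ℕ) (I : Ideal (Rz n)) : Set (Z4z n) :=
  {a | ∃ A : Polynomial (ZMod 4), π4 n A = a ∧ vz n * πR n (A.map ι4R) ∈ I}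

/-- `Res(D)` of a subset `D ⊆ Z₄[z]/(zⁿ-1)`, as a subset of `Z₂[z]/(zⁿ-1)`. -/
noncomputable def Res4 (n : ℕ) (D : Set (Z4z n)) : Set (Z2z n) :=
  {a | ∃ A B : Polynomial (ZMod 4),
    π2 n (A.map r42) = a ∧ π4 n A + 2 * π4 n B ∈ D}

/-- `Tor(D)` of a subset `D ⊆ Z₄[z]/(zⁿ-1)`. -/
noncomputable def Tor4 (n : ℕ) (D : Set (Z4z n)) : Set (Z2z n) :=
  {a | ∃ A : Polynomial (ZMod 4), π2 n (A.map r42) = a ∧ 2 * π4 n A ∈ D}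


lemma vz_sq (n : ℕ) : vz n * vz n = 0 := by
  have hv : vR * vR = 0 := by
    show (Ideal.Quotient.mk _ X) * (Ideal.Quotient.mk _ X) = 0
    rw [← map_mul, Ideal.Quotient.eq_zero_iff_mem, ← sq]
    exact Ideal.subset_span rfl
  show πR n (Polynomial.C vR) * πR n (Polynomial.C vR) = 0
  rw [← map_mul, ← Polynomial.C_mul, hv]
  simp

lemma zero_mul_Rz (n : ℕ) (b : Rz n) : (0 : Rz n) * b = 0 := zero_mul b

lemma mul_zero_Rz (n : ℕ) (b : Rz n) : b * (0 : Rz n) = 0 := mul_zero b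

lemma pi2_map_eq (n : ℕ) {A A' : Polynomial (ZMod 4)} (h : π4 n A = π4 n A') :
    π2 n (A.map r42) = π2 n (A'.map r42) := by
  have hmem : A - A' ∈ Ideal.span {(X : Polynomial (ZMod 4)) ^ n - 1} :=
    Ideal.Quotient.eq.mp h
  obtain ⟨c, hc⟩ := Ideal.mem_span_singleton.mp hmem
  refine Ideal.Quotient.eq.mpr (Ideal.mem_span_singleton.mpr ⟨c.map r42, ?_⟩)
  rw [← Polynomial.map_sub, hc, Polynomial.map_mul, Polynomial.map_sub,
    Polynomial.map_pow, Polynomial.map_X, Polynomial.map_one]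

lemma two_poly_zmod2 : (2 : Polynomial (ZMod 2)) = 0 := by
  simpa using CharP.cast_eq_zero (Polynomial (ZMod 2)) 2

lemma map_two_mul (B : Polynomial (ZMod 4)) : (2 * B).map r42 = 0 := by
  rw [Polynomial.map_mul]
  have h2 : ((2 : Polynomial (ZMod 4)).map r42) = (2 : Polynomial (ZMod 2)) := by
    simp
  rw [h2, two_poly_zmod2, zero_mul]

lemma four_Z4z (n : ℕ) : (2 : Z4z n) * 2 = 0 := by
  have h4 : ((4 : ℕ) : Polynomial (ZMod 4)) = 0 := CharP.cast_eq_zero _ 4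
  have : ((4 : ℕ) : Z4z n) = 0 := by
    rw [← map_natCast (π4 n) 4, h4, map_zero]
  calc (2 : Z4z n) * 2 = ((4 : ℕ) : Z4z n) := by norm_num
    _ = 0 := this

lemma dvd_of_span_subset (n : ℕ) {g h : Polynomial (ZMod 2)}
    (hh : h ∣ (X : Polynomial (ZMod 2)) ^ n - 1)
    (hsub : ((Ideal.span {π2 n g} : Ideal (Z2z n)) : Set (Z2z n)) ⊆
      ((Ideal.span {π2 n h} : Ideal (Z2z n)) : Set (Z2z n))) : h ∣ g := by
  have hg : π2 n g ∈ (Ideal.span {π2 n h} : Ideal (Z2z n)) :=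
    hsub (Ideal.subset_span rfl)
  obtain ⟨c, hc⟩ := Ideal.mem_span_singleton.mp hg
  obtain ⟨C, rfl⟩ := Ideal.Quotient.mk_surjective c
  have : π2 n (g - h * C) = 0 := by
    rw [map_sub, map_mul, sub_eq_zero]
    exact hc
  have hmem : g - h * C ∈ Ideal.span {(X : Polynomial (ZMod 2)) ^ n - 1} :=
    (Ideal.Quotient.eq_zero_iff_mem).mp this
  have hdvd : h ∣ g - h * C :=
    hh.trans (Ideal.mem_span_singleton.mp hmem)
  have := dvd_add hdvd (Dvd.intro C rfl)
  simpa using this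

theorem stmt12 (n : ℕ) (hn : 0 < n) (I : Ideal (Rz n))
    (g11 g22 g33 g44 : Polynomial (ZMod 2))
    (h11m : g11.Monic) (h22m : g22.Monic) (h33m : g33.Monic) (h44m : g44.Monic)
    (h11d : g11 ∣ X ^ n - 1) (h22d : g22 ∣ X ^ n - 1)
    (h33d : g33 ∣ X ^ n - 1) (h44d : g44 ∣ X ^ n - 1)
    (h1 : ((Ideal.span {π2 n g11} : Ideal (Z2z n)) : Set (Z2z n)) = Res4 n (ResR n I))
    (h2 : ((Ideal.span {π2 n g22} : Ideal (Z2z n)) : Set (Z2z n)) = Tor4 n (ResR n I))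
    (h3 : ((Ideal.span {π2 n g33} : Ideal (Z2z n)) : Set (Z2z n)) = Res4 n (TorR n I))
    (h4 : ((Ideal.span {π2 n g44} : Ideal (Z2z n)) : Set (Z2z n)) = Tor4 n (TorR n I)) :
    Res4 n (ResR n I) ⊆ Res4 n (TorR n I) ∧
    Res4 n (ResR n I) ⊆ Tor4 n (TorR n I) ∧
    Tor4 n (ResR n I) ⊆ Tor4 n (TorR n I) ∧
    g33 ∣ g11 ∧ g44 ∣ g11 ∧ g44 ∣ g22 := by
  have hinc1 : Res4 n (ResR n I) ⊆ Res4 n (TorR n I) := by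
    rintro a ⟨A, B, ha, A1, hA1, b, hb⟩
    have hA1' : π4 n A1 = π4 n (A + 2 * B) := by
      rw [map_add, map_mul, map_ofNat]; exact hA1
    refine ⟨A1, 0, ?_, A1, by simp, ?_⟩
    · rw [pi2_map_eq n hA1', Polynomial.map_add, map_two_mul, add_zero, ha]
    · have := I.mul_mem_left (vz n) hb
      rwa [mul_add, ← mul_assoc, vz_sq, zero_mul_Rz, add_zero] at this
  have hinc2 : Res4 n (ResR n I) ⊆ Tor4 n (TorR n I) := by
    rintro a ⟨A, B, ha, A1, hA1, b, hb⟩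
    refine ⟨A, ha, 2 * A1, ?_, ?_⟩
    · rw [map_mul, map_ofNat, hA1, mul_add, ← mul_assoc, four_Z4z, zero_mul, add_zero]
    · have := I.mul_mem_left (2 * vz n) hb
      rw [mul_add] at this
      have h0 : 2 * vz n * (vz n * b) = 0 := by
        rw [mul_assoc, ← mul_assoc (vz n), vz_sq, zero_mul_Rz, mul_zero_Rz]
      rw [h0, add_zero] at this
      have h2 : vz n * πR n ((2 * A1).map ι4R) = 2 * vz n * πR n (A1.map ι4R) := by
        rw [Polynomial.map_mul, map_mul]
        have : ((2 : Polynomial (ZMod 4)).map ι4R) = (2 : Polynomial Rv) := by simp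
        rw [this, map_ofNat]
        ring
      rwa [h2]
  have hinc3 : Tor4 n (ResR n I) ⊆ Tor4 n (TorR n I) := by
    rintro a ⟨A, ha, A1, hA1, b, hb⟩
    refine ⟨A, ha, A1, hA1, ?_⟩
    have := I.mul_mem_left (vz n) hb
    rwa [mul_add, ← mul_assoc, vz_sq, zero_mul_Rz, add_zero] at this
  refine ⟨hinc1, hinc2, hinc3, ?_, ?_, ?_⟩
  · exact dvd_of_span_subset n h33d (by rw [h1, h3]; exact hinc1)
  · exact dvd_of_span_subset n h44d (by rw [h1, h4]; exact hinc2)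
  · exact dvd_of_span_subset n h44d (by rw [h2, h4]; exact hinc3)
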